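/- The TRDM revenue is at least the revenue of the VCG mechanism with referrals and attains the upper bound b*_{V_{-r_s^*}}: under truthful bidding, Σ_{j=1}^{k−1} (b*_{V_{-a_j}} − v_w) + b*_{V_{-w}} ≤ b*_{V_{-r_s^*}}, where the left-hand side is the VCG revenue (each non-winner path agent a_j, 1 ≤ j ≤ k−1, receives the VCG reward v_w − b*_{V_{-a_j}}, and the winner pays b*_{V_{-w}}) and the right-hand side is the TRDM revenue. -/

import Mathlib

open Classical

/-- A finite directed tree rooted at the seller `s`: every vertex reaches `s`
by iterating the parent map, and the root is its own parent. The agents are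
the non-root vertices. -/
structure DiffusionTree (α : Type*) where
  s : α
  parent : α → α
  parent_s : parent s = s
  reaches_s : ∀ x : α, ∃ n : ℕ, parent^[n] x = s

namespace DiffusionTree

variable {α : Type*} [Fintype α]

/-- The set of agents: all vertices except the seller. -/
noncomputable def agents (T : DiffusionTree α) : Finset α :=
  Finset.univ.filter (fun x => x ≠ T.s)

/-- `T.desc i j` : `j` is a strict descendant of `i`. -/
def desc (T : DiffusionTree α) (i j : α) : Prop :=
  ∃ n : ℕ, 0 < n ∧ T.parent^[n] j = i

/-- `V_{-i}` relative to the active agent set `A`: remove `i` and its descendants. -/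
noncomputable def Vminus (T : DiffusionTree α) (A : Finset α) (i : α) : Finset α :=
  A.filter (fun j => j ≠ i ∧ ¬ T.desc i j)

/-- `b*_S`: the highest bid in `S`, with `b*_∅ = 0`. -/
noncomputable def bstar (b : α → ℝ) (S : Finset α) : ℝ :=
  WithBot.unbotD 0 ((S.image b).max)

/-- Distance from a vertex to the root. -/
noncomputable def depth (T : DiffusionTree α) (x : α) : ℕ :=
  Nat.find (T.reaches_s x)

/-- The vertex `a_j` on the path `s = a_0, a_1, …, a_k = w` from `s` to `w`. -/
noncomputable def pathVx (T : DiffusionTree α) (w : α) (j : ℕ) : α :=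
  T.parent^[T.depth w - j] w

/-- TRDM payments, on the active agent set `A`, for bids `b` and winner `w`:
the winner pays `b*_{V_{-w}}`; an intermediate path agent `a_j` pays
`b*_{V_{-a_j}} − b*_{V_{-a_{j+1}}}`; everyone else pays `0`. -/
noncomputable def payment (T : DiffusionTree α) (A : Finset α) (b : α → ℝ)
    (w : α) (x : α) : ℝ :=
  if x = w then bstar b (T.Vminus A w)
  else if ∃ j : ℕ, 1 ≤ j ∧ j < T.depth w ∧ T.pathVx w j = x then
    bstar b (T.Vminus A x) - bstar b (T.Vminus A (T.pathVx w (T.depth x + 1)))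
  else 0

/-- TRDM utility of an agent `i` with true valuation `v`. -/
noncomputable def util (T : DiffusionTree α) (A : Finset α) (b : α → ℝ)
    (w : α) (v : ℝ) (i : α) : ℝ :=
  (if i = w then v else 0) - T.payment A b w i

end DiffusionTree

open DiffusionTree in
/-- The TRDM revenue is at least the revenue of the VCG
mechanism with referrals and attains the upper bound `b*_{V_{-r_s^*}}`: under
truthful bidding, `Σ_{j=1}^{k−1} (b*_{V_{-a_j}} − v_w) + b*_{V_{-w}} ≤ b*_{V_{-r_s^*}}`,
where the left-hand side is the VCG revenue (each non-winner path agent `a_j`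
receives the VCG reward `v_w − b*_{V_{-a_j}}` and the winner pays `b*_{V_{-w}}`)
and the right-hand side is the TRDM revenue. -/
theorem trdm_revenue_ge_vcg
    {α : Type*} [Fintype α] (T : DiffusionTree α)
    (v : α → ℝ) (hpos : ∀ j ∈ T.agents, 0 ≤ v j)
    (hdist : ∀ j ∈ T.agents, ∀ j' ∈ T.agents, j ≠ j' → v j ≠ v j')
    (w : α) (hw : w ∈ T.agents)
    (hmax : ∀ j ∈ T.agents, j ≠ w → v j < v w) :
    (∑ j ∈ Finset.Ico 1 (T.depth w),
        (bstar v (T.Vminus T.agents (T.pathVx w j)) - v w))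
      + bstar v (T.Vminus T.agents w)
      ≤ bstar v (T.Vminus T.agents (T.pathVx w 1)) := by
  classical
  have hws : w ≠ T.s := by
    simpa [DiffusionTree.agents] using hw
  have hvw : 0 ≤ v w := hpos w hw
  have hd1 : 1 ≤ T.depth w := by
    rcases Nat.eq_zero_or_pos (T.depth w) with h0 | h
    · exact absurd ((Nat.find_eq_zero (T.reaches_s w)).mp h0) hws
    · exact h
  have key : ∀ i : α, w ∉ T.Vminus T.agents i → bstar v (T.Vminus T.agents i) ≤ v w := by
    intro i hi
    unfold DiffusionTree.bstar
    rcases (T.Vminus T.agents i).eq_empty_or_nonempty with he | hne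
    · simpa [he] using hvw
    · obtain ⟨m, hm⟩ := Finset.max_of_nonempty (hne.image v)
      rw [hm]
      obtain ⟨j, hjmem, hjv⟩ := Finset.mem_image.mp (Finset.mem_of_max hm)
      have hjA : j ∈ T.agents := (Finset.mem_filter.mp hjmem).1
      have hjw : j ≠ w := fun h => hi (h ▸ hjmem)
      have := le_of_lt (hmax j hjA hjw)
      simpa [hjv] using this
  have hnotmem : ∀ j : ℕ, j < T.depth w → w ∉ T.Vminus T.agents (T.pathVx w j) := by
    intro j hj hmem
    have hdesc : T.desc (T.pathVx w j) w :=
      ⟨T.depth w - j, Nat.sub_pos_of_lt hj, rfl⟩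
    exact (Finset.mem_filter.mp hmem).2.2 hdesc
  have hBw : bstar v (T.Vminus T.agents w) ≤ v w := by
    apply key
    intro hmem
    exact (Finset.mem_filter.mp hmem).2.1 rfl
  rcases eq_or_lt_of_le hd1 with heq | hlt
  · have : T.pathVx w 1 = w := by
      simp [DiffusionTree.pathVx, ← heq]
    simp [← heq, this]
  · rw [Finset.sum_eq_sum_Ico_succ_bot hlt]
    have hrest : (∑ j ∈ Finset.Ico 2 (T.depth w),
        (bstar v (T.Vminus T.agents (T.pathVx w j)) - v w)) ≤ 0 := by
      apply Finset.sum_nonpos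
      intro j hj
      have hjd : j < T.depth w := (Finset.mem_Ico.mp hj).2
      have := key _ (hnotmem j hjd)
      linarith
    linarith
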